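/- arXiv:1605.05410 — 2 statements merged into one kernel-verified Lean document; each statement's English description precedes it below -/
import Mathlib

section
/- If α > 1 and α ≥ β ≥ 0, then for all real a, b, the integral ∫_ℝ dy / (⟨y - a⟩^α ⟨y - b⟩^β) is bounded by C ⟨a - b⟩^{-β} for a constant C depending only on α, β, where ⟨x⟩ = (1 + x²)^{1/2}. -/
open MeasureTheory

lemma four_rpow (β : ℝ) : (4 : ℝ) ^ (β/2) = 2 ^ β := by
  have h4 : (4 : ℝ) = (2 : ℝ) ^ (2 : ℝ) := by
    rw [show (2:ℝ) = ((2:ℕ):ℝ) by norm_num, Real.rpow_natCast]; norm_num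
  rw [h4, ← Real.rpow_mul (by norm_num)]
  congr 1; ring

lemma ptwise (α β : ℝ) (hβ0 : 0 ≤ β) (hβα : β ≤ α) {A B D : ℝ}
    (hA : 1 ≤ A) (hB : 1 ≤ B) (hD : 0 < D) (hmax : D ≤ 4 * max A B) :
    (A ^ (α/2) * B ^ (β/2))⁻¹ ≤
      2 ^ β * (D ^ (β/2))⁻¹ * ((A ^ (α/2))⁻¹ + (B ^ (α/2))⁻¹) := by
  have hA0 : (0:ℝ) < A := lt_of_lt_of_le one_pos hA
  have hB0 : (0:ℝ) < B := lt_of_lt_of_le one_pos hB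
  have hD4 : (0:ℝ) < D / 4 := by linarith
  have hinv : ∀ x : ℝ, 0 < x → ∀ z : ℝ, (x ^ z)⁻¹ = x ^ (-z) := fun x hx z => by
    rw [Real.rpow_neg hx.le]
  have hD4_rw : ((D/4) ^ (β/2))⁻¹ = 2 ^ β * (D ^ (β/2))⁻¹ := by
    rw [Real.div_rpow hD.le (by norm_num), ← four_rpow β]
    field_simp
  have hDinv : (0:ℝ) ≤ (D ^ (β/2))⁻¹ := by positivity
  have h2β : (0:ℝ) < 2 ^ β := by positivity
  rcases le_total A B with hAB | hAB
  · -- max = B, D/4 ≤ B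
    have hDB : D / 4 ≤ B := by rw [max_eq_right hAB] at hmax; linarith
    have key : (B ^ (β/2))⁻¹ ≤ ((D/4) ^ (β/2))⁻¹ := by
      rw [hinv B hB0, hinv _ hD4]
      exact Real.rpow_le_rpow_of_nonpos hD4 hDB (by linarith)
    have h1 : (A ^ (α/2) * B ^ (β/2))⁻¹ = (A ^ (α/2))⁻¹ * (B ^ (β/2))⁻¹ := by
      rw [mul_inv]
    rw [h1, hD4_rw] at *
    have hAa : (0:ℝ) ≤ (A ^ (α/2))⁻¹ := by positivity
    have hBb : (0:ℝ) ≤ (B ^ (α/2))⁻¹ := by positivity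
    nlinarith [mul_le_mul_of_nonneg_left key hAa, mul_nonneg (mul_nonneg h2β.le hDinv) hBb]
  · -- max = A, D/4 ≤ A
    have hDA : D / 4 ≤ A := by rw [max_eq_left hAB] at hmax; linarith
    have key1 : (A ^ (β/2))⁻¹ ≤ ((D/4) ^ (β/2))⁻¹ := by
      rw [hinv A hA0, hinv _ hD4]
      exact Real.rpow_le_rpow_of_nonpos hD4 hDA (by linarith)
    have key2 : A ^ (-((α-β)/2)) ≤ B ^ (-((α-β)/2)) :=
      Real.rpow_le_rpow_of_nonpos hB0 hAB (by linarith)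
    have hsplitA : (A ^ (α/2))⁻¹ = (A ^ (β/2))⁻¹ * A ^ (-((α-β)/2)) := by
      rw [hinv A hA0, hinv A hA0, ← Real.rpow_add hA0]
      congr 1; ring
    have hsplitB : A ^ (-((α-β)/2)) * (B ^ (β/2))⁻¹ ≤ (B ^ (α/2))⁻¹ := by
      rw [hinv B hB0 (β/2), hinv B hB0 (α/2)]
      calc A ^ (-((α-β)/2)) * B ^ (-(β/2)) ≤ B ^ (-((α-β)/2)) * B ^ (-(β/2)) := by
            apply mul_le_mul_of_nonneg_right key2 (by positivity)
        _ = B ^ (-((α-β)/2) + -(β/2)) := (Real.rpow_add hB0 _ _).symm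
        _ = B ^ (-(α/2)) := by congr 1; ring
    have h1 : (A ^ (α/2) * B ^ (β/2))⁻¹
        = (A ^ (β/2))⁻¹ * (A ^ (-((α-β)/2)) * (B ^ (β/2))⁻¹) := by
      rw [mul_inv, hsplitA]; ring
    rw [h1, hD4_rw] at *
    have hAa : (0:ℝ) ≤ (A ^ (α/2))⁻¹ := by positivity
    have hx : (0:ℝ) ≤ A ^ (-((α-β)/2)) * (B ^ (β/2))⁻¹ := by positivity
    calc (A ^ (β/2))⁻¹ * (A ^ (-((α-β)/2)) * (B ^ (β/2))⁻¹)
        ≤ (2 ^ β * (D ^ (β/2))⁻¹) * (A ^ (-((α-β)/2)) * (B ^ (β/2))⁻¹) :=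
          mul_le_mul_of_nonneg_right key1 hx
      _ ≤ (2 ^ β * (D ^ (β/2))⁻¹) * (B ^ (α/2))⁻¹ :=
          mul_le_mul_of_nonneg_left hsplitB (by positivity)
      _ ≤ 2 ^ β * (D ^ (β/2))⁻¹ * ((A ^ (α/2))⁻¹ + (B ^ (α/2))⁻¹) := by
          nlinarith [hAa, mul_nonneg h2β.le hDinv]

/-- Calculus lemma: if `α > 1` and `α ≥ β ≥ 0`, then
`∫ dy / (⟨y-a⟩^α ⟨y-b⟩^β) ≲ ⟨a-b⟩^{-β}` with constant depending only on `α, β`,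
where `⟨x⟩ = (1+x²)^{1/2}`. -/
theorem stmt0 (α β : ℝ) (hα : 1 < α) (hβ0 : 0 ≤ β) (hβα : β ≤ α) :
    ∃ C : ℝ, 0 < C ∧ ∀ a b : ℝ,
      (∫ y : ℝ, ((1 + (y - a)^2) ^ (α/2) * (1 + (y - b)^2) ^ (β/2))⁻¹) ≤
        C * ((1 + (a - b)^2) ^ (β/2))⁻¹ := by
  have hint : Integrable (fun y : ℝ => ((1 + y^2) ^ (α/2))⁻¹) := by
    have h := integrable_rpow_neg_one_add_norm_sq (E := ℝ) (μ := volume) (r := α)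
      (by simpa using hα)
    refine h.congr (Filter.Eventually.of_forall fun x => ?_)
    have hx : (0:ℝ) < 1 + x ^ 2 := by positivity
    simp only [Real.norm_eq_abs, sq_abs]
    rw [neg_div, Real.rpow_neg hx.le]
  set I := ∫ y : ℝ, ((1 + y^2) ^ (α/2))⁻¹ with hI
  have hI0 : 0 ≤ I := integral_nonneg fun y => by positivity
  refine ⟨2 ^ β * (2 * I) + 1, by positivity, fun a b => ?_⟩
  set D := 1 + (a - b)^2 with hDdef
  have hD : (0:ℝ) < D := by positivity
  have hDinv : (0:ℝ) ≤ (D ^ (β/2))⁻¹ := by positivity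
  have hinta : Integrable (fun y : ℝ => ((1 + (y - a)^2) ^ (α/2))⁻¹) :=
    hint.comp_sub_right a
  have hintb : Integrable (fun y : ℝ => ((1 + (y - b)^2) ^ (α/2))⁻¹) :=
    hint.comp_sub_right b
  have hintg : Integrable (fun y : ℝ =>
      2 ^ β * (D ^ (β/2))⁻¹ * (((1 + (y - a)^2) ^ (α/2))⁻¹ + ((1 + (y - b)^2) ^ (α/2))⁻¹)) :=
    (hinta.add hintb).const_mul _
  have hcont : Continuous (fun y : ℝ =>
      ((1 + (y - a)^2) ^ (α/2) * (1 + (y - b)^2) ^ (β/2))⁻¹) := by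
    apply Continuous.inv₀
    · exact (((continuous_const.add ((continuous_id.sub continuous_const).pow 2)).rpow_const
        (fun y => Or.inl (by show (1:ℝ) + (y - a)^2 ≠ 0; positivity))).mul
        ((continuous_const.add ((continuous_id.sub continuous_const).pow 2)).rpow_const
        (fun y => Or.inl (by show (1:ℝ) + (y - b)^2 ≠ 0; positivity))))
    · intro y
      have h1 : (0:ℝ) < 1 + (y - a)^2 := by positivity
      have h2 : (0:ℝ) < 1 + (y - b)^2 := by positivity
      positivity
  have hintf : Integrable (fun y : ℝ =>
      ((1 + (y - a)^2) ^ (α/2) * (1 + (y - b)^2) ^ (β/2))⁻¹) := by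
    refine hinta.mono' hcont.aestronglyMeasurable (Filter.Eventually.of_forall fun y => ?_)
    have h1 : (0:ℝ) < 1 + (y - a)^2 := by positivity
    have h2 : (1:ℝ) ≤ (1 + (y - b)^2) ^ (β/2) :=
      Real.one_le_rpow (by nlinarith [sq_nonneg (y - b)]) (by positivity)
    have h3 : (0:ℝ) < (1 + (y - a)^2) ^ (α/2) := by positivity
    rw [Real.norm_eq_abs, abs_of_nonneg (by positivity)]
    rw [mul_inv]
    calc ((1 + (y - a)^2) ^ (α/2))⁻¹ * ((1 + (y - b)^2) ^ (β/2))⁻¹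
        ≤ ((1 + (y - a)^2) ^ (α/2))⁻¹ * 1 := by
          apply mul_le_mul_of_nonneg_left _ (by positivity)
          exact inv_le_one_of_one_le₀ h2
      _ = ((1 + (y - a)^2) ^ (α/2))⁻¹ := mul_one _
  have hmono : (∫ y : ℝ, ((1 + (y - a)^2) ^ (α/2) * (1 + (y - b)^2) ^ (β/2))⁻¹) ≤
      ∫ y : ℝ, 2 ^ β * (D ^ (β/2))⁻¹ *
        (((1 + (y - a)^2) ^ (α/2))⁻¹ + ((1 + (y - b)^2) ^ (α/2))⁻¹) := by
    refine integral_mono hintf hintg fun y => ?_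
    apply ptwise α β hβ0 hβα (by nlinarith [sq_nonneg (y - a)]) (by nlinarith [sq_nonneg (y - b)]) hD
    rcases le_total ((y - a)^2) ((y - b)^2) with h | h
    · calc D ≤ 4 * (1 + (y - b)^2) := by
            simp only [hDdef]; nlinarith [sq_nonneg ((y - a) + (y - b))]
        _ ≤ 4 * max (1 + (y - a)^2) (1 + (y - b)^2) := by
            have := le_max_right (1 + (y - a)^2) (1 + (y - b)^2); linarith
    · calc D ≤ 4 * (1 + (y - a)^2) := by
            simp only [hDdef]; nlinarith [sq_nonneg ((y - a) + (y - b))]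
        _ ≤ 4 * max (1 + (y - a)^2) (1 + (y - b)^2) := by
            have := le_max_left (1 + (y - a)^2) (1 + (y - b)^2); linarith
  have heq : (∫ y : ℝ, 2 ^ β * (D ^ (β/2))⁻¹ *
      (((1 + (y - a)^2) ^ (α/2))⁻¹ + ((1 + (y - b)^2) ^ (α/2))⁻¹))
      = 2 ^ β * (D ^ (β/2))⁻¹ * (2 * I) := by
    rw [integral_const_mul, integral_add hinta hintb]
    have ha : (∫ y : ℝ, ((1 + (y - a)^2) ^ (α/2))⁻¹) = I :=
      integral_sub_right_eq_self (fun y : ℝ => ((1 + y^2) ^ (α/2))⁻¹) a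
    have hb : (∫ y : ℝ, ((1 + (y - b)^2) ^ (α/2))⁻¹) = I :=
      integral_sub_right_eq_self (fun y : ℝ => ((1 + y^2) ^ (α/2))⁻¹) b
    rw [ha, hb]; ring
  rw [heq] at hmono
  calc (∫ y : ℝ, ((1 + (y - a)^2) ^ (α/2) * (1 + (y - b)^2) ^ (β/2))⁻¹)
      ≤ 2 ^ β * (D ^ (β/2))⁻¹ * (2 * I) := hmono
    _ ≤ (2 ^ β * (2 * I) + 1) * (D ^ (β/2))⁻¹ := by nlinarith [hDinv]
end

section
/- With B₁, B₂ as above and û = χ_{B₁}, v̂ = χ_{B₂}, the convolution satisfies (û * v̂)(ζ, σ) ≳ N^{-1} on a set comparable to a translate of B₁, and consequently ‖uv‖_{X^{s+α, b'}} ≳ N^{s + α - 3/2} for any fixed b'. Hence the bilinear estimate ‖uv‖_{X^{s+α,b-1}} ≲ ‖u‖_{X^{s,b}}‖v‖_{X^{s,b}_±} can only hold for all N if α ≤ 1/2. -/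
open MeasureTheory

/-- The Schrödinger Bourgain norm on the Fourier side (`F = û`). -/
noncomputable def XNorm (d : ℕ) (s b : ℝ) (F : EuclideanSpace ℝ (Fin d) × ℝ → ℂ) : ℝ :=
  (∫ p : EuclideanSpace ℝ (Fin d) × ℝ,
    (1 + ‖p.1‖^2) ^ s * (1 + (p.2 + ‖p.1‖^2)^2) ^ b * ‖F p‖^2) ^ ((1:ℝ)/2)

/-- The wave Bourgain norm on the Fourier side (`F = v̂`). -/
noncomputable def XpmNorm (d : ℕ) (ε s b : ℝ) (F : EuclideanSpace ℝ (Fin d) × ℝ → ℂ) : ℝ :=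
  (∫ p : EuclideanSpace ℝ (Fin d) × ℝ,
    (1 + ‖p.1‖^2) ^ s * (1 + (p.2 + ε * ‖p.1‖)^2) ^ b * ‖F p‖^2) ^ ((1:ℝ)/2)

/-- Space-time Fourier convolution: the transform of `uv` is `û * v̂`. -/
noncomputable def stConv (d : ℕ) (F G : EuclideanSpace ℝ (Fin d) × ℝ → ℂ)
    (p : EuclideanSpace ℝ (Fin d) × ℝ) : ℂ :=
  ∫ q : EuclideanSpace ℝ (Fin d) × ℝ, F q * G (p - q)

def SetB₁ (d : ℕ) [NeZero d] (N : ℝ) : Set (EuclideanSpace ℝ (Fin d) × ℝ) :=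
  {p | |p.1 0 - N| < N⁻¹ ∧ (∀ i : Fin d, i ≠ 0 → |p.1 i| < 1) ∧ |p.2 + N^2| < 1}

def SetB₂ (d : ℕ) [NeZero d] (N : ℝ) : Set (EuclideanSpace ℝ (Fin d) × ℝ) :=
  {p | |p.1 0| < N⁻¹ ∧ (∀ i : Fin d, i ≠ 0 → |p.1 i| < 1) ∧ |p.2| < 1}

namespace Stmt12

/-! ### Elementary arithmetic helpers -/

lemma sq_le_sq_of_abs_le {y c : ℝ} (h : |y| ≤ c) : y^2 ≤ c^2 := by
  have h' := abs_le.mp h; nlinarith [h'.1, h'.2]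

lemma key0 {N : ℝ} (hN : 2 ≤ N) : 4 ≤ N^2 := by nlinarith

lemma inv_facts {N : ℝ} (hN : 2 ≤ N) :
    0 < N⁻¹ ∧ N⁻¹ ≤ 1/2 ∧ N⁻¹^2 ≤ 1/4 ∧ N * N⁻¹ = 1 := by
  have hN0 : (0:ℝ) < N := by linarith
  have h1 : (0:ℝ) < N⁻¹ := by positivity
  have h2 : N⁻¹ ≤ 1/2 := by
    rw [inv_eq_one_div, div_le_div_iff₀ hN0 (by norm_num)]; linarith
  exact ⟨h1, h2, by nlinarith, mul_inv_cancel₀ hN0.ne'⟩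

lemma key1 {N t r : ℝ} (hN : 2 ≤ N) (hr : r ≤ N⁻¹) (ht : |t - N| < r) :
    N^2 - 2 ≤ t^2 ∧ t^2 ≤ N^2 + 3 := by
  obtain ⟨h1, h2, h3, h4⟩ := inv_facts hN
  have ht' := abs_lt.mp ht
  have hta : N - N⁻¹ ≤ t := by linarith [ht'.1]
  have htb : t ≤ N + N⁻¹ := by linarith [ht'.2]
  constructor
  · nlinarith [mul_nonneg (by linarith : (0:ℝ) ≤ t - (N - N⁻¹))
      (by linarith : (0:ℝ) ≤ t + (N - N⁻¹)), sq_nonneg N⁻¹]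
  · nlinarith [mul_nonneg (by linarith : (0:ℝ) ≤ (N + N⁻¹) - t)
      (by linarith : (0:ℝ) ≤ (N + N⁻¹) + t)]

lemma norm_le_of_sq {y c : ℝ} (hy : 0 ≤ y) (hc : 0 ≤ c) (h : y^2 ≤ c + 1) : y ≤ c + 1 := by
  nlinarith [sq_nonneg (y - (c+1))]

lemma mem_Ioo_iff_abs {y c r : ℝ} : |y - c| < r ↔ y ∈ Set.Ioo (c - r) (c + r) := by
  rw [Set.mem_Ioo, abs_sub_lt_iff]
  constructor <;> intro h <;> constructor <;> linarith [h.1, h.2]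

/-! ### Boxes and their volumes -/

def Slab (d : ℕ) [NeZero d] (a r ρ : ℝ) : Set (EuclideanSpace ℝ (Fin d)) :=
  {x | |x 0 - a| < r ∧ ∀ i : Fin d, i ≠ 0 → |x i| < ρ}

lemma slab_eq (d : ℕ) [NeZero d] (a r ρ : ℝ) : Slab d a r ρ =
    ((MeasurableEquiv.toLp 2 (Fin d → ℝ)).symm) ⁻¹'
      (Set.univ.pi fun i => if i = 0 then Set.Ioo (a - r) (a + r) else Set.Ioo (-ρ) ρ) := by
  ext x
  simp only [Slab, Set.mem_preimage, Set.mem_pi, Set.mem_univ, forall_true_left,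
    Set.mem_setOf_eq]
  have hx : ∀ i, ((MeasurableEquiv.toLp 2 (Fin d → ℝ)).symm) x i = x i := fun i => rfl
  constructor
  · rintro ⟨h0, hi⟩ i
    rw [hx]
    by_cases h : i = 0
    · subst h; simpa [mem_Ioo_iff_abs] using h0
    · simpa [h, Set.mem_Ioo, abs_lt] using (abs_lt.mp (hi i h))
  · intro h
    refine ⟨?_, fun i hi => ?_⟩
    · have := h 0; rw [hx] at this; simpa [mem_Ioo_iff_abs] using this
    · have := h i; rw [hx] at this; simp only [if_neg hi] at this
      exact abs_lt.mpr this

lemma measurableSet_slab (d : ℕ) [NeZero d] (a r ρ : ℝ) : MeasurableSet (Slab d a r ρ) := by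
  rw [slab_eq]
  apply ((MeasurableEquiv.toLp 2 (Fin d → ℝ)).symm).measurable
  apply MeasurableSet.univ_pi
  intro i
  by_cases h : i = 0 <;> simp [h]

lemma volume_slab (d : ℕ) [NeZero d] (a r ρ : ℝ) :
    volume (Slab d a r ρ) = ENNReal.ofReal (2 * r) * ENNReal.ofReal (2 * ρ) ^ (d - 1) := by
  rw [slab_eq]
  rw [(EuclideanSpace.volume_preserving_symm_measurableEquiv_toLp (Fin d)).measure_preimage]
  · rw [volume_pi_pi]
    have h : ∀ i : Fin d, volume (if i = 0 then Set.Ioo (a - r) (a + r) else Set.Ioo (-ρ) ρ)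
        = if i = 0 then ENNReal.ofReal (2 * r) else ENNReal.ofReal (2 * ρ) := by
      intro i; split_ifs <;> rw [Real.volume_Ioo] <;> ring_nf
    simp_rw [h]
    rw [← Finset.mul_prod_erase Finset.univ _ (Finset.mem_univ (0 : Fin d)), if_pos rfl]
    congr 1
    rw [Finset.prod_congr rfl (fun i hi => if_neg (Finset.ne_of_mem_erase hi)),
      Finset.prod_const, Finset.card_erase_of_mem (Finset.mem_univ _), Finset.card_univ,
      Fintype.card_fin]
  · apply MeasurableSet.nullMeasurableSet
    apply MeasurableSet.univ_pi
    intro i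
    by_cases h : i = 0 <;> simp [h]

def Box (d : ℕ) [NeZero d] (a r ρ c ρ' : ℝ) : Set (EuclideanSpace ℝ (Fin d) × ℝ) :=
  (Slab d a r ρ) ×ˢ Set.Ioo (c - ρ') (c + ρ')

lemma measurableSet_box (d : ℕ) [NeZero d] (a r ρ c ρ' : ℝ) :
    MeasurableSet (Box d a r ρ c ρ') :=
  (measurableSet_slab d a r ρ).prod measurableSet_Ioo

lemma volume_box (d : ℕ) [NeZero d] (a r ρ c ρ' : ℝ) :
    volume (Box d a r ρ c ρ') =
      ENNReal.ofReal (2 * r) * ENNReal.ofReal (2 * ρ) ^ (d - 1) * ENNReal.ofReal (2 * ρ') := by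
  rw [Box, Measure.volume_eq_prod _ _, Measure.prod_prod, volume_slab, Real.volume_Ioo]
  congr 1
  ring_nf

lemma volume_box_lt_top (d : ℕ) [NeZero d] (a r ρ c ρ' : ℝ) :
    volume (Box d a r ρ c ρ') < ⊤ := by
  rw [volume_box]
  exact ENNReal.mul_lt_top
    (ENNReal.mul_lt_top ENNReal.ofReal_lt_top (ENNReal.pow_lt_top ENNReal.ofReal_lt_top))
    ENNReal.ofReal_lt_top

lemma volume_box_toReal (d : ℕ) [NeZero d] (a r ρ c ρ' : ℝ) (hr : 0 ≤ r) (hρ : 0 ≤ ρ)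
    (hρ' : 0 ≤ ρ') :
    (volume (Box d a r ρ c ρ')).toReal = (2*r) * (2*ρ)^(d-1) * (2*ρ') := by
  rw [volume_box, ENNReal.toReal_mul, ENNReal.toReal_mul, ENNReal.toReal_pow,
    ENNReal.toReal_ofReal (by linarith), ENNReal.toReal_ofReal (by linarith),
    ENNReal.toReal_ofReal (by linarith)]

lemma setB₁_eq (d : ℕ) [NeZero d] (N : ℝ) : SetB₁ d N = Box d N N⁻¹ 1 (-N^2) 1 := by
  ext p
  simp only [SetB₁, Box, Slab, Set.mem_setOf_eq, Set.mem_prod, Set.mem_Ioo]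
  constructor
  · rintro ⟨h1, h2, h3⟩
    have := abs_lt.mp h3
    exact ⟨⟨h1, h2⟩, by constructor <;> linarith [this.1, this.2]⟩
  · rintro ⟨⟨h1, h2⟩, h3, h4⟩
    exact ⟨h1, h2, abs_lt.mpr ⟨by linarith, by linarith⟩⟩

lemma setB₂_eq (d : ℕ) [NeZero d] (N : ℝ) : SetB₂ d N = Box d 0 N⁻¹ 1 0 1 := by
  ext p
  simp only [SetB₂, Box, Slab, Set.mem_setOf_eq, Set.mem_prod, Set.mem_Ioo, sub_zero, zero_sub,
    zero_add]
  constructor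
  · rintro ⟨h1, h2, h3⟩
    have := abs_lt.mp h3
    exact ⟨⟨h1, h2⟩, this.1, this.2⟩
  · rintro ⟨⟨h1, h2⟩, h3, h4⟩
    exact ⟨h1, h2, abs_lt.mpr ⟨h3, h4⟩⟩

/-! ### The convolution of indicators -/

lemma stConv_indicator {d : ℕ} (A B : Set (EuclideanSpace ℝ (Fin d) × ℝ))
    (hA : MeasurableSet A) (hB : MeasurableSet B) (p : EuclideanSpace ℝ (Fin d) × ℝ) :
    stConv d (A.indicator 1) (B.indicator 1) p
      = ((volume (A ∩ {q | p - q ∈ B})).toReal : ℂ) := by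
  have h : ∀ q, A.indicator (1 : EuclideanSpace ℝ (Fin d) × ℝ → ℂ) q * B.indicator 1 (p - q)
      = (A ∩ {q | p - q ∈ B}).indicator (fun _ => (1:ℂ)) q := by
    intro q
    by_cases h1 : q ∈ A <;> by_cases h2 : p - q ∈ B <;>
      simp [Set.indicator_apply, h1, h2]
  rw [stConv]
  simp_rw [h]
  have hs : MeasurableSet (A ∩ {q | p - q ∈ B}) :=
    hA.inter (hB.preimage (measurable_const.sub measurable_id))
  rw [integral_indicator_const _ hs]
  simp [Complex.real_smul]
  rfl

lemma measurable_interVol {d : ℕ} (A B : Set (EuclideanSpace ℝ (Fin d) × ℝ))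
    (hA : MeasurableSet A) (hB : MeasurableSet B) :
    Measurable fun p => (volume (A ∩ {q | p - q ∈ B})).toReal := by
  apply Measurable.ennreal_toReal
  have h : ∀ p : EuclideanSpace ℝ (Fin d) × ℝ, A ∩ {q | p - q ∈ B}
      = Prod.mk p ⁻¹' {z : (EuclideanSpace ℝ (Fin d) × ℝ) × (EuclideanSpace ℝ (Fin d) × ℝ) |
          z.2 ∈ A ∧ z.1 - z.2 ∈ B} := by
    intro p; ext q; simp [Set.mem_inter_iff]
  simp_rw [h]
  exact measurable_measure_prodMk_left
    ((hA.preimage measurable_snd).inter (hB.preimage (measurable_fst.sub measurable_snd)))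

/-! ### rpow bookkeeping -/

lemma rpow_bounds {a x A r : ℝ} (ha : 0 < a) (h1 : a ≤ x) (h2 : x ≤ A) :
    min (a ^ r) (A ^ r) ≤ x ^ r ∧ x ^ r ≤ max (a ^ r) (A ^ r) := by
  rcases le_total 0 r with hr | hr
  · exact ⟨le_trans (min_le_left _ _) (Real.rpow_le_rpow ha.le h1 hr),
      le_trans (Real.rpow_le_rpow (ha.le.trans h1) h2 hr) (le_max_right _ _)⟩
  · exact ⟨le_trans (min_le_right _ _) (Real.rpow_le_rpow_of_nonpos (ha.trans_le h1) h2 hr),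
      le_trans (Real.rpow_le_rpow_of_nonpos ha h1 hr) (le_max_left _ _)⟩

lemma weight_scale {x N r A : ℝ} (hN : 0 < N) (h1 : N^2/2 ≤ x) (h2 : x ≤ A * N^2) :
    min ((1/2:ℝ) ^ r) (A ^ r) * N ^ (2*r) ≤ x ^ r ∧
      x ^ r ≤ max ((1/2:ℝ) ^ r) (A ^ r) * N ^ (2*r) := by
  have hN2 : (0:ℝ) < N ^ 2 := by positivity
  have hy1 : (1/2 : ℝ) ≤ x / N^2 := by rw [le_div_iff₀ hN2]; linarith
  have hy2 : x / N^2 ≤ A := by rw [div_le_iff₀ hN2]; linarith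
  have hx : x = (x / N^2) * N^2 := by field_simp
  have hNr : (N ^ 2 : ℝ) ^ r = N ^ (2*r) := by
    rw [← Real.rpow_natCast N 2, ← Real.rpow_mul hN.le]
    norm_num
  have hb := rpow_bounds (r := r) (by norm_num : (0:ℝ) < 1/2) hy1 hy2
  constructor
  · calc min ((1/2:ℝ) ^ r) (A ^ r) * N ^ (2*r)
        ≤ (x / N^2) ^ r * N ^ (2*r) := by
          apply mul_le_mul_of_nonneg_right hb.1 (Real.rpow_nonneg hN.le _)
    _ = x ^ r := by
          rw [← hNr, ← Real.mul_rpow (by positivity) hN2.le, ← hx]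
  · calc x ^ r = (x / N^2) ^ r * N ^ (2*r) := by
          rw [← hNr, ← Real.mul_rpow (by positivity) hN2.le, ← hx]
    _ ≤ max ((1/2:ℝ) ^ r) (A ^ r) * N ^ (2*r) := by
          apply mul_le_mul_of_nonneg_right hb.2 (Real.rpow_nonneg hN.le _)

/-! ### Generic integral bounds -/

lemma integral_weight_indicator_le {X : Type*} [MeasureSpace X] (w : X → ℝ) (A : Set X)
    (hA : MeasurableSet A) (hAfin : volume A < ⊤) (M : ℝ)
    (hM : ∀ p ∈ A, w p ≤ M) (hw : ∀ p, 0 ≤ w p) (hwm : AEStronglyMeasurable w volume) :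
    ∫ p, w p * ‖A.indicator (1 : X → ℂ) p‖^2 ≤ M * (volume A).toReal := by
  have h : (fun p => w p * ‖A.indicator (1 : X → ℂ) p‖^2) = A.indicator w := by
    funext p
    by_cases hp : p ∈ A <;> simp [Set.indicator_apply, hp]
  rw [h, integral_indicator hA]
  have hb := norm_setIntegral_le_of_norm_le_const (μ := volume) (s := A) (f := w) hAfin
    (fun x hx => by rw [Real.norm_eq_abs, abs_of_nonneg (hw x)]; exact hM x hx)
  calc ∫ p in A, w p ≤ ‖∫ p in A, w p‖ := le_abs_self _
  _ ≤ M * (volume A).toReal := hb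

lemma le_integral_of_const_le {X : Type*} [MeasureSpace X] (f : X → ℝ) (hf0 : ∀ p, 0 ≤ f p)
    (hfi : Integrable f) (S : Set X) (hS : MeasurableSet S) (hSfin : volume S ≠ ⊤)
    (m : ℝ) (hm : ∀ p ∈ S, m ≤ f p) : m * (volume S).toReal ≤ ∫ p, f p :=
  le_trans (setIntegral_ge_of_const_le_real hS hSfin hm hfi.integrableOn)
    (setIntegral_le_integral hfi (Filter.Eventually.of_forall hf0))

lemma norm_sq_bounds (d : ℕ) [NeZero d] (x : EuclideanSpace ℝ (Fin d)) (ρ : ℝ)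
    (hi : ∀ i : Fin d, i ≠ 0 → |x i| ≤ ρ) :
    (x 0)^2 ≤ ‖x‖^2 ∧ ‖x‖^2 ≤ (x 0)^2 + d * ρ^2 := by
  have hn : ‖x‖^2 = ∑ i, (x i)^2 := by
    rw [EuclideanSpace.norm_eq, Real.sq_sqrt (by positivity)]
    congr 1; funext i; rw [Real.norm_eq_abs, sq_abs]
  constructor
  · rw [hn]
    exact Finset.single_le_sum (f := fun i => (x i)^2) (fun i _ => sq_nonneg _)
      (Finset.mem_univ 0)
  · rw [hn]
    have hsum : ∑ i, (x i)^2 ≤ ∑ i : Fin d, (if i = 0 then (x 0)^2 else ρ^2) := by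
      apply Finset.sum_le_sum
      intro i _
      by_cases h : i = 0
      · subst h; rw [if_pos rfl]
      · rw [if_neg h]
        exact sq_le_sq_of_abs_le (hi i h)
    have heq : ∑ i : Fin d, (if i = 0 then (x 0)^2 else ρ^2)
        = (x 0)^2 + ((d:ℝ) - 1) * ρ^2 := by
      rw [← Finset.add_sum_erase Finset.univ _ (Finset.mem_univ (0 : Fin d)), if_pos rfl]
      congr 1
      rw [Finset.sum_congr rfl (fun i hi => if_neg (Finset.ne_of_mem_erase hi)),
        Finset.sum_const, Finset.card_erase_of_mem (Finset.mem_univ _), Finset.card_univ,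
        Fintype.card_fin, nsmul_eq_mul]
      congr 1
      have : 1 ≤ d := Nat.one_le_iff_ne_zero.2 (NeZero.ne d)
      push_cast [Nat.cast_sub this]
      ring
    have hd1 : (1:ℝ) ≤ d := by exact_mod_cast Nat.one_le_iff_ne_zero.2 (NeZero.ne d)
    nlinarith [sq_nonneg ρ]

lemma weight_cont (d : ℕ) (s b : ℝ) (g : EuclideanSpace ℝ (Fin d) × ℝ → ℝ) (hg : Continuous g) :
    Continuous fun p : EuclideanSpace ℝ (Fin d) × ℝ =>
      (1 + ‖p.1‖^2) ^ s * (1 + (p.2 + g p)^2) ^ b := by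
  have h1 : Continuous fun p : EuclideanSpace ℝ (Fin d) × ℝ => (1 + ‖p.1‖^2 : ℝ) := by
    continuity
  have h2 : Continuous fun p : EuclideanSpace ℝ (Fin d) × ℝ => (1 + (p.2 + g p)^2 : ℝ) := by
    continuity
  exact (h1.rpow_const fun p => Or.inl (by positivity)).mul
    (h2.rpow_const fun p => Or.inl (by positivity))

/-! ### Constants -/

noncomputable def cLow (d : ℕ) (s' b' : ℝ) : ℝ :=
  (min ((1/2:ℝ)^s') (((d:ℝ)+3)^s') * min 1 ((1+((d:ℝ)+3)^2)^b')) ^ ((1:ℝ)/2)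

noncomputable def cKu (d : ℕ) (s b : ℝ) : ℝ :=
  (max ((1/2:ℝ)^s) (((d:ℝ)+3)^s) * max 1 ((1+((d:ℝ)+4)^2)^b) * 2^(d+1)) ^ ((1:ℝ)/2)

noncomputable def cKv (d : ℕ) (s b : ℝ) : ℝ :=
  (max 1 (((d:ℝ)+2)^s) * max 1 ((1+((d:ℝ)+2)^2)^b) * 2^(d+1)) ^ ((1:ℝ)/2)

lemma cLow_pos (d : ℕ) (s' b' : ℝ) : 0 < cLow d s' b' :=
  Real.rpow_pos_of_pos (mul_pos
    (lt_min (Real.rpow_pos_of_pos (by norm_num) _) (Real.rpow_pos_of_pos (by positivity) _))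
    (lt_min one_pos (Real.rpow_pos_of_pos (by positivity) _))) _

lemma cKu_nonneg (d : ℕ) (s b : ℝ) : 0 ≤ cKu d s b :=
  Real.rpow_nonneg (mul_nonneg (mul_nonneg
    (le_trans (Real.rpow_nonneg (by norm_num) s) (le_max_left _ _))
    (le_trans zero_le_one (le_max_left _ _))) (by positivity)) _

lemma cKv_nonneg (d : ℕ) (s b : ℝ) : 0 ≤ cKv d s b :=
  Real.rpow_nonneg (mul_nonneg (mul_nonneg
    (le_trans zero_le_one (le_max_left _ _))
    (le_trans zero_le_one (le_max_left _ _))) (by positivity)) _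

noncomputable def Vfun (d : ℕ) [NeZero d] (N : ℝ) (p : EuclideanSpace ℝ (Fin d) × ℝ) : ℝ :=
  (volume (SetB₁ d N ∩ {q | p - q ∈ SetB₂ d N})).toReal

noncomputable def wS (d : ℕ) (s b : ℝ) (p : EuclideanSpace ℝ (Fin d) × ℝ) : ℝ :=
  (1 + ‖p.1‖^2) ^ s * (1 + (p.2 + ‖p.1‖^2)^2) ^ b

lemma XNorm_nonneg (d : ℕ) (s b : ℝ) (F : EuclideanSpace ℝ (Fin d) × ℝ → ℂ) :
    0 ≤ XNorm d s b F :=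
  Real.rpow_nonneg (integral_nonneg fun p => by positivity) _

lemma XpmNorm_nonneg (d : ℕ) (ε s b : ℝ) (F : EuclideanSpace ℝ (Fin d) × ℝ → ℂ) :
    0 ≤ XpmNorm d ε s b F :=
  Real.rpow_nonneg (integral_nonneg fun p => by positivity) _

end Stmt12
namespace Stmt12

/-! ### Upper bound for `‖u‖` -/

lemma Xu_le (d : ℕ) [NeZero d] (s b N : ℝ) (hN : 2 ≤ N) :
    XNorm d s b ((SetB₁ d N).indicator 1) ≤ cKu d s b * N ^ (s - 1/2) := by
  have hN0 : (0:ℝ) < N := by linarith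
  have hd0 : (0:ℝ) ≤ d := Nat.cast_nonneg d
  obtain ⟨hi1, hi2, hi3, hi4⟩ := inv_facts hN
  have hN4 := key0 hN
  set K1 := max ((1/2:ℝ)^s) (((d:ℝ)+3)^s) with hK1def
  set K2 := max (1:ℝ) ((1+((d:ℝ)+4)^2)^b) with hK2def
  have hK1nn : (0:ℝ) ≤ K1 := le_trans (Real.rpow_nonneg (by norm_num) s) (le_max_left _ _)
  have hK2nn : (0:ℝ) ≤ K2 := le_trans zero_le_one (le_max_left _ _)
  have hw : ∀ p ∈ SetB₁ d N,
      (1 + ‖p.1‖^2) ^ s * (1 + (p.2 + ‖p.1‖^2)^2) ^ b ≤ K1 * N^(2*s) * K2 := by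
    rintro p ⟨h1, h2, h3⟩
    obtain ⟨h3a, h3b⟩ := abs_lt.mp h3
    obtain ⟨hk1, hk2⟩ := key1 hN (le_refl N⁻¹) h1
    obtain ⟨hn1, hn2⟩ := norm_sq_bounds d p.1 1 (fun i hi => (h2 i hi).le)
    have hx1a : N^2/2 ≤ 1 + ‖p.1‖^2 := by linarith
    have hx1b : 1 + ‖p.1‖^2 ≤ ((d:ℝ)+3) * N^2 := by
      linarith [mul_nonneg hd0 (by linarith : (0:ℝ) ≤ N^2 - 4)]
    have hw1 := (weight_scale (r := s) (A := (d:ℝ)+3) hN0 hx1a hx1b).2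
    have habs2 : |p.2 + ‖p.1‖^2| ≤ (d:ℝ)+4 := by
      rw [abs_le]; constructor <;> linarith
    have hx2' : 1 + (p.2 + ‖p.1‖^2)^2 ≤ 1 + ((d:ℝ)+4)^2 := by
      linarith [sq_le_sq_of_abs_le habs2]
    have hw2 := (rpow_bounds (r := b) one_pos (le_add_of_nonneg_right (sq_nonneg _)) hx2').2
    rw [Real.one_rpow] at hw2
    exact mul_le_mul hw1 hw2 (Real.rpow_nonneg (by positivity) b)
      (mul_nonneg hK1nn (Real.rpow_nonneg hN0.le _))
  have hmeas : MeasurableSet (SetB₁ d N) := setB₁_eq d N ▸ measurableSet_box d N N⁻¹ 1 (-N^2) 1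
  have hlt : volume (SetB₁ d N) < ⊤ := setB₁_eq d N ▸ volume_box_lt_top d N N⁻¹ 1 (-N^2) 1
  have hw0 : ∀ p : EuclideanSpace ℝ (Fin d) × ℝ,
      0 ≤ (1 + ‖p.1‖^2) ^ s * (1 + (p.2 + ‖p.1‖^2)^2) ^ b := fun p => by positivity
  have hwm : AEStronglyMeasurable (fun p : EuclideanSpace ℝ (Fin d) × ℝ =>
      (1 + ‖p.1‖^2) ^ s * (1 + (p.2 + ‖p.1‖^2)^2) ^ b) volume :=
    (weight_cont d s b (fun p => ‖p.1‖^2) (by continuity)).aestronglyMeasurable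
  have hInt := integral_weight_indicator_le _ (SetB₁ d N) hmeas hlt (K1 * N^(2*s) * K2) hw hw0 hwm
  have hvol : (volume (SetB₁ d N)).toReal = 2*N⁻¹ * 2^(d-1) * 2 := by
    rw [setB₁_eq, volume_box_toReal d N N⁻¹ 1 (-N^2) 1 hi1.le zero_le_one zero_le_one]
    norm_num
  rw [hvol] at hInt
  have hrhs : K1 * N^(2*s) * K2 * (2*N⁻¹ * 2^(d-1) * 2) = K1 * K2 * 2^(d+1) * N^(2*s - 1) := by
    have hdd : d - 1 + 2 = d + 1 := by
      have := Nat.one_le_iff_ne_zero.2 (NeZero.ne d); omega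
    have h2p : (2:ℝ)^(d+1) = 2^(d-1) * 4 := by rw [← hdd, pow_add]; norm_num
    have hNs : N^(2*s) * N⁻¹ = N^(2*s-1) := by
      rw [show (N⁻¹:ℝ) = N^(-1:ℝ) from (Real.rpow_neg_one N).symm, ← Real.rpow_add hN0]
      ring_nf
    calc K1 * N^(2*s) * K2 * (2*N⁻¹ * 2^(d-1) * 2)
        = K1 * K2 * (2^(d-1) * 4) * (N^(2*s) * N⁻¹) := by ring
      _ = K1 * K2 * 2^(d+1) * N^(2*s-1) := by rw [← h2p, hNs]
  rw [hrhs] at hInt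
  have hIcc : 0 ≤ ∫ p : EuclideanSpace ℝ (Fin d) × ℝ,
      (1 + ‖p.1‖^2) ^ s * (1 + (p.2 + ‖p.1‖^2)^2) ^ b * ‖(SetB₁ d N).indicator (1 : EuclideanSpace ℝ (Fin d) × ℝ → ℂ) p‖^2 :=
    integral_nonneg fun p => by positivity
  rw [XNorm, cKu]
  refine le_trans (Real.rpow_le_rpow hIcc hInt (by norm_num)) ?_
  rw [Real.mul_rpow (mul_nonneg (mul_nonneg hK1nn hK2nn) (by positivity))
    (Real.rpow_nonneg hN0.le _), ← Real.rpow_mul hN0.le]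
  have h12 : (2*s-1)*((1:ℝ)/2) = s - 1/2 := by ring
  rw [h12]

/-! ### Upper bound for `‖v‖` -/

lemma Xv_le (d : ℕ) [NeZero d] (s b ε N : ℝ) (hε : ε = 1 ∨ ε = -1) (hN : 2 ≤ N) :
    XpmNorm d ε s b ((SetB₂ d N).indicator 1) ≤ cKv d s b * N ^ (-(1:ℝ)/2) := by
  have hN0 : (0:ℝ) < N := by linarith
  have hd0 : (0:ℝ) ≤ d := Nat.cast_nonneg d
  obtain ⟨hi1, hi2, hi3, hi4⟩ := inv_facts hN
  set K1 := max (1:ℝ) (((d:ℝ)+2)^s) with hK1def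
  set K2 := max (1:ℝ) ((1+((d:ℝ)+2)^2)^b) with hK2def
  have hK1nn : (0:ℝ) ≤ K1 := le_trans zero_le_one (le_max_left _ _)
  have hK2nn : (0:ℝ) ≤ K2 := le_trans zero_le_one (le_max_left _ _)
  have hw : ∀ p ∈ SetB₂ d N,
      (1 + ‖p.1‖^2) ^ s * (1 + (p.2 + ε * ‖p.1‖)^2) ^ b ≤ K1 * K2 := by
    rintro p ⟨h1, h2, h3⟩
    obtain ⟨h3a, h3b⟩ := abs_lt.mp h3
    have habs : |p.1 0| ≤ 1 := le_trans h1.le (by linarith)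
    have hp01 : (p.1 0)^2 ≤ 1 := by
      have := sq_le_sq_of_abs_le habs; rwa [one_pow] at this
    obtain ⟨hn1, hn2⟩ := norm_sq_bounds d p.1 1 (fun i hi => (h2 i hi).le)
    have hx1b : 1 + ‖p.1‖^2 ≤ (d:ℝ)+2 := by linarith
    have hw1 := (rpow_bounds (r := s) one_pos (le_add_of_nonneg_right (sq_nonneg _)) hx1b).2
    rw [Real.one_rpow] at hw1
    have hnormle : ‖p.1‖ ≤ (d:ℝ)+1 := norm_le_of_sq (norm_nonneg _) hd0 (by linarith)
    have habs2 : |p.2 + ε * ‖p.1‖| ≤ (d:ℝ)+2 := by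
      rcases hε with h | h <;> subst h <;> rw [abs_le] <;> constructor <;>
        linarith [norm_nonneg p.1]
    have hx2' : 1 + (p.2 + ε*‖p.1‖)^2 ≤ 1 + ((d:ℝ)+2)^2 := by
      linarith [sq_le_sq_of_abs_le habs2]
    have hw2 := (rpow_bounds (r := b) one_pos (le_add_of_nonneg_right (sq_nonneg _)) hx2').2
    rw [Real.one_rpow] at hw2
    exact mul_le_mul hw1 hw2 (Real.rpow_nonneg (by positivity) b) hK1nn
  have hmeas : MeasurableSet (SetB₂ d N) := setB₂_eq d N ▸ measurableSet_box d 0 N⁻¹ 1 0 1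
  have hlt : volume (SetB₂ d N) < ⊤ := setB₂_eq d N ▸ volume_box_lt_top d 0 N⁻¹ 1 0 1
  have hw0 : ∀ p : EuclideanSpace ℝ (Fin d) × ℝ,
      0 ≤ (1 + ‖p.1‖^2) ^ s * (1 + (p.2 + ε * ‖p.1‖)^2) ^ b := fun p => by positivity
  have hwm : AEStronglyMeasurable (fun p : EuclideanSpace ℝ (Fin d) × ℝ =>
      (1 + ‖p.1‖^2) ^ s * (1 + (p.2 + ε * ‖p.1‖)^2) ^ b) volume :=
    (weight_cont d s b (fun p => ε * ‖p.1‖) (by continuity)).aestronglyMeasurable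
  have hInt := integral_weight_indicator_le _ (SetB₂ d N) hmeas hlt (K1 * K2) hw hw0 hwm
  have hvol : (volume (SetB₂ d N)).toReal = 2*N⁻¹ * 2^(d-1) * 2 := by
    rw [setB₂_eq, volume_box_toReal d 0 N⁻¹ 1 0 1 hi1.le zero_le_one zero_le_one]
    norm_num
  rw [hvol] at hInt
  have hrhs : K1 * K2 * (2*N⁻¹ * 2^(d-1) * 2) = K1 * K2 * 2^(d+1) * N^(-1:ℝ) := by
    have hdd : d - 1 + 2 = d + 1 := by
      have := Nat.one_le_iff_ne_zero.2 (NeZero.ne d); omega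
    have h2p : (2:ℝ)^(d+1) = 2^(d-1) * 4 := by rw [← hdd, pow_add]; norm_num
    rw [show (N⁻¹:ℝ) = N^(-1:ℝ) from (Real.rpow_neg_one N).symm, h2p]
    ring
  rw [hrhs] at hInt
  have hIcc : 0 ≤ ∫ p : EuclideanSpace ℝ (Fin d) × ℝ,
      (1 + ‖p.1‖^2) ^ s * (1 + (p.2 + ε * ‖p.1‖)^2) ^ b * ‖(SetB₂ d N).indicator (1 : EuclideanSpace ℝ (Fin d) × ℝ → ℂ) p‖^2 :=
    integral_nonneg fun p => by positivity
  rw [XpmNorm, cKv]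
  refine le_trans (Real.rpow_le_rpow hIcc hInt (by norm_num)) ?_
  rw [Real.mul_rpow (mul_nonneg (mul_nonneg hK1nn hK2nn) (by positivity))
    (Real.rpow_nonneg hN0.le _), ← Real.rpow_mul hN0.le]
  have h12 : (-1:ℝ)*((1:ℝ)/2) = -(1:ℝ)/2 := by ring
  rw [h12]

end Stmt12
namespace Stmt12

/-! ### Lower bound for the convolution norm -/

set_option maxHeartbeats 2000000 in
lemma Xc_ge (d : ℕ) [NeZero d] (s' b' N : ℝ) (hN : 2 ≤ N) :
    cLow d s' b' * N ^ (s' - 3/2)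
      ≤ XNorm d s' b' (stConv d ((SetB₁ d N).indicator 1) ((SetB₂ d N).indicator 1)) := by
  have hN0 : (0:ℝ) < N := by linarith
  have hd0 : (0:ℝ) ≤ d := Nat.cast_nonneg d
  have hd1 : (1:ℝ) ≤ d := by exact_mod_cast Nat.one_le_iff_ne_zero.2 (NeZero.ne d)
  obtain ⟨hi1, hi2, hi3, hi4⟩ := inv_facts hN
  have hN4 := key0 hN
  have hB1meas : MeasurableSet (SetB₁ d N) :=
    setB₁_eq d N ▸ measurableSet_box d N N⁻¹ 1 (-N^2) 1
  have hB2meas : MeasurableSet (SetB₂ d N) :=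
    setB₂_eq d N ▸ measurableSet_box d 0 N⁻¹ 1 0 1
  have hB1lt : volume (SetB₁ d N) < ⊤ := setB₁_eq d N ▸ volume_box_lt_top d N N⁻¹ 1 (-N^2) 1
  have hV0 : ∀ p, 0 ≤ Vfun d N p := fun p => ENNReal.toReal_nonneg
  have hVle : ∀ p, Vfun d N p ≤ (volume (SetB₁ d N)).toReal := fun p =>
    ENNReal.toReal_mono hB1lt.ne (measure_mono Set.inter_subset_left)
  have hw0 : ∀ p, 0 ≤ wS d s' b' p := fun p => by
    rw [wS]; positivity
  have hfeq : (fun p : EuclideanSpace ℝ (Fin d) × ℝ =>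
      (1 + ‖p.1‖^2) ^ s' * (1 + (p.2 + ‖p.1‖^2)^2) ^ b' *
        ‖stConv d ((SetB₁ d N).indicator 1) ((SetB₂ d N).indicator 1) p‖^2)
      = fun p => wS d s' b' p * (Vfun d N p)^2 := by
    funext p
    rw [stConv_indicator _ _ hB1meas hB2meas p, Complex.norm_real, Real.norm_eq_abs, sq_abs]
    rfl
  -- support of the convolution
  have hTmeas := measurableSet_box d N (2*N⁻¹) 2 (-N^2) 2
  have hTlt := volume_box_lt_top d N (2*N⁻¹) 2 (-N^2) 2
  have hTzero : ∀ p ∉ Box d N (2*N⁻¹) 2 (-N^2) 2, Vfun d N p = 0 := by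
    intro p hp
    have hempty : SetB₁ d N ∩ {q | p - q ∈ SetB₂ d N} = ∅ := by
      rw [Set.eq_empty_iff_forall_notMem]
      rintro q ⟨⟨hq1, hq2, hq3⟩, hq4⟩
      obtain ⟨hr1, hr2, hr3⟩ := hq4
      apply hp
      have e1 : ∀ i, (p - q).1 i = p.1 i - q.1 i := fun i => rfl
      have e2 : (p - q).2 = p.2 - q.2 := rfl
      rw [e1] at hr1
      rw [e2] at hr3
      have hq3' := abs_lt.mp hq3
      have hr3' := abs_lt.mp hr3
      have hq1' := abs_lt.mp hq1
      have hr1' := abs_lt.mp hr1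
      refine ⟨⟨?_, fun i hi => ?_⟩, ?_, ?_⟩
      · rw [abs_lt]; constructor <;> linarith [hq1'.1, hq1'.2, hr1'.1, hr1'.2]
      · have ha := abs_lt.mp (hq2 i hi)
        have hb := abs_lt.mp (hr2 i hi)
        rw [e1 i] at hb
        rw [abs_lt]; constructor <;> linarith [ha.1, ha.2, hb.1, hb.2]
      · linarith [hq3'.1, hq3'.2, hr3'.1, hr3'.2]
      · linarith [hq3'.1, hq3'.2, hr3'.1, hr3'.2]
    rw [Vfun, hempty]
    simp
  -- bound on the support box
  have hM : ∀ p ∈ Box d N (2*N⁻¹) 2 (-N^2) 2,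
      wS d s' b' p * (Vfun d N p)^2 ≤
        max 1 ((1+(N+1)^2+4*(d:ℝ))^s') * max 1 ((1+(2+N^2+(N+1)^2+4*(d:ℝ))^2)^b')
          * ((volume (SetB₁ d N)).toReal)^2 := by
    rintro p ⟨⟨h1, h2⟩, h3⟩
    obtain ⟨h1a, h1b⟩ := abs_lt.mp h1
    obtain ⟨h3a, h3b⟩ := h3
    have habs : |p.1 0| ≤ N+1 := by
      rw [abs_le]; constructor <;> linarith
    have hp01 := sq_le_sq_of_abs_le habs
    obtain ⟨hn1, hn2⟩ := norm_sq_bounds d p.1 2 (fun i hi => (h2 i hi).le)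
    have hx1 : 1 + ‖p.1‖^2 ≤ 1+(N+1)^2+4*(d:ℝ) := by linarith
    have hw1 := (rpow_bounds (r := s') one_pos (le_add_of_nonneg_right (sq_nonneg _)) hx1).2
    rw [Real.one_rpow] at hw1
    have habs2 : |p.2 + ‖p.1‖^2| ≤ 2+N^2+(N+1)^2+4*(d:ℝ) := by
      rw [abs_le]; constructor <;>
        linarith [sq_nonneg (p.1 0), sq_nonneg (N+1), sq_nonneg N]
    have hx2 : 1 + (p.2+‖p.1‖^2)^2 ≤ 1 + (2+N^2+(N+1)^2+4*(d:ℝ))^2 := by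
      linarith [sq_le_sq_of_abs_le habs2]
    have hw2 := (rpow_bounds (r := b') one_pos (le_add_of_nonneg_right (sq_nonneg _)) hx2).2
    rw [Real.one_rpow] at hw2
    have hwp : wS d s' b' p ≤
        max 1 ((1+(N+1)^2+4*(d:ℝ))^s') * max 1 ((1+(2+N^2+(N+1)^2+4*(d:ℝ))^2)^b') := by
      rw [wS]
      exact mul_le_mul hw1 hw2 (Real.rpow_nonneg (by positivity) b')
        (le_trans zero_le_one (le_max_left _ _))
    exact mul_le_mul hwp (pow_le_pow_left₀ (hV0 p) (hVle p) 2) (sq_nonneg _)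
      (mul_nonneg (le_trans zero_le_one (le_max_left _ _))
        (le_trans zero_le_one (le_max_left _ _)))
  -- integrability
  have hVmeas := measurable_interVol (SetB₁ d N) (SetB₂ d N) hB1meas hB2meas
  have hwcont := weight_cont d s' b' (fun p => ‖p.1‖^2) (by continuity)
  have hfmeas : AEStronglyMeasurable (fun p => wS d s' b' p * (Vfun d N p)^2) volume :=
    (hwcont.measurable.mul (hVmeas.pow_const 2)).aestronglyMeasurable
  have hgint : Integrable ((Box d N (2*N⁻¹) 2 (-N^2) 2).indicator fun _ =>
      max 1 ((1+(N+1)^2+4*(d:ℝ))^s') * max 1 ((1+(2+N^2+(N+1)^2+4*(d:ℝ))^2)^b')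
        * ((volume (SetB₁ d N)).toReal)^2) volume :=
    (integrable_indicator_iff hTmeas).2 (integrableOn_const hTlt.ne)
  have hfint : Integrable (fun p => wS d s' b' p * (Vfun d N p)^2) volume := by
    apply Integrable.mono' hgint hfmeas
    apply Filter.Eventually.of_forall
    intro p
    rw [Real.norm_eq_abs, abs_of_nonneg (mul_nonneg (hw0 p) (sq_nonneg _))]
    by_cases hp : p ∈ Box d N (2*N⁻¹) 2 (-N^2) 2
    · rw [Set.indicator_of_mem hp]; exact hM p hp
    · rw [Set.indicator_of_notMem hp, hTzero p hp]
      simp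
  -- the lower-bound set S
  have hSmeas := measurableSet_box d N (N⁻¹/2) (1/2) (-N^2) (1/2)
  have hSlt := volume_box_lt_top d N (N⁻¹/2) (1/2) (-N^2) (1/2)
  have hSvol : (volume (Box d N (N⁻¹/2) (1/2) (-N^2) (1/2))).toReal = N⁻¹ := by
    rw [volume_box_toReal d N (N⁻¹/2) (1/2) (-N^2) (1/2) (by positivity) (by norm_num)
      (by norm_num)]
    norm_num
    ring
  have hVS : ∀ p ∈ Box d N (N⁻¹/2) (1/2) (-N^2) (1/2), N⁻¹ ≤ Vfun d N p := by
    rintro p hp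
    obtain ⟨⟨hp1, hp2⟩, hp3⟩ := hp
    obtain ⟨hp3a, hp3b⟩ := hp3
    have hp1' := abs_lt.mp hp1
    have hsub : Box d N (N⁻¹/2) (1/2) (-N^2) (1/2) ⊆
        SetB₁ d N ∩ {q | p - q ∈ SetB₂ d N} := by
      rintro q ⟨⟨hq1, hq2⟩, hq3⟩
      obtain ⟨hq3a, hq3b⟩ := hq3
      have e1 : ∀ i, (p - q).1 i = p.1 i - q.1 i := fun i => rfl
      have e2 : (p - q).2 = p.2 - q.2 := rfl
      have hq1' := abs_lt.mp hq1
      refine ⟨⟨?_, fun i hi => ?_, ?_⟩, ?_, fun i hi => ?_, ?_⟩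
      · rw [abs_lt]; constructor <;> linarith [hq1'.1, hq1'.2, hi1]
      · have := abs_lt.mp (hq2 i hi); rw [abs_lt]; constructor <;> linarith [this.1, this.2]
      · rw [abs_lt]; constructor <;> linarith
      · rw [e1 0, abs_lt]; constructor <;> linarith [hq1'.1, hq1'.2, hp1'.1, hp1'.2]
      · have ha := abs_lt.mp (hq2 i hi)
        have hb := abs_lt.mp (hp2 i hi)
        rw [e1 i, abs_lt]; constructor <;> linarith [ha.1, ha.2, hb.1, hb.2]
      · rw [e2, abs_lt]; constructor <;> linarith
    have hfin : volume (SetB₁ d N ∩ {q | p - q ∈ SetB₂ d N}) ≠ ⊤ :=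
      (lt_of_le_of_lt (measure_mono Set.inter_subset_left) hB1lt).ne
    calc N⁻¹ = (volume (Box d N (N⁻¹/2) (1/2) (-N^2) (1/2))).toReal := hSvol.symm
      _ ≤ Vfun d N p := ENNReal.toReal_mono hfin (measure_mono hsub)
  set K1 := min ((1/2:ℝ)^s') (((d:ℝ)+3)^s') with hK1def
  set K2 := min (1:ℝ) ((1+((d:ℝ)+3)^2)^b') with hK2def
  have hK1pos : 0 < K1 :=
    lt_min (Real.rpow_pos_of_pos (by norm_num) _) (Real.rpow_pos_of_pos (by positivity) _)
  have hK2pos : 0 < K2 := lt_min one_pos (Real.rpow_pos_of_pos (by positivity) _)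
  have hm : ∀ p ∈ Box d N (N⁻¹/2) (1/2) (-N^2) (1/2),
      K1 * N^(2*s') * K2 * (N⁻¹)^2 ≤ wS d s' b' p * (Vfun d N p)^2 := by
    rintro p hp
    obtain ⟨⟨h1, h2⟩, h3⟩ := hp
    obtain ⟨h3a, h3b⟩ := h3
    have hr : N⁻¹/2 ≤ N⁻¹ := by linarith
    obtain ⟨hk1, hk2⟩ := key1 hN hr h1
    obtain ⟨hn1, hn2⟩ := norm_sq_bounds d p.1 (1/2) (fun i hi => (h2 i hi).le)
    have hx1a : N^2/2 ≤ 1 + ‖p.1‖^2 := by linarith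
    have hx1b : 1 + ‖p.1‖^2 ≤ ((d:ℝ)+3) * N^2 := by
      linarith [mul_nonneg hd0 (by linarith : (0:ℝ) ≤ N^2 - 4)]
    have hw1 := (weight_scale (r := s') (A := (d:ℝ)+3) hN0 hx1a hx1b).1
    have habs2 : |p.2 + ‖p.1‖^2| ≤ (d:ℝ)+3 := by
      rw [abs_le]; constructor <;> linarith
    have hx2 : 1 + (p.2 + ‖p.1‖^2)^2 ≤ 1 + ((d:ℝ)+3)^2 := by
      linarith [sq_le_sq_of_abs_le habs2]
    have hw2 := (rpow_bounds (r := b') one_pos (le_add_of_nonneg_right (sq_nonneg _)) hx2).1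
    rw [Real.one_rpow] at hw2
    have hVp := hVS p ⟨⟨h1, h2⟩, h3a, h3b⟩
    have hVsq : (N⁻¹)^2 ≤ (Vfun d N p)^2 := pow_le_pow_left₀ hi1.le hVp 2
    have hinner : K1 * N^(2*s') * K2 ≤
        (1 + ‖p.1‖^2) ^ s' * (1 + (p.2 + ‖p.1‖^2)^2) ^ b' :=
      mul_le_mul hw1 hw2 hK2pos.le (Real.rpow_nonneg (by positivity) s')
    calc K1 * N^(2*s') * K2 * (N⁻¹)^2
        ≤ ((1 + ‖p.1‖^2) ^ s' * (1 + (p.2 + ‖p.1‖^2)^2) ^ b') * (Vfun d N p)^2 :=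
          mul_le_mul hinner hVsq (sq_nonneg _) (by positivity)
      _ = wS d s' b' p * (Vfun d N p)^2 := rfl
  have hle := le_integral_of_const_le (fun p => wS d s' b' p * (Vfun d N p)^2)
    (fun p => mul_nonneg (hw0 p) (sq_nonneg _)) hfint _ hSmeas hSlt.ne
    (K1 * N^(2*s') * K2 * (N⁻¹)^2) hm
  rw [hSvol] at hle
  have halg : K1 * N^(2*s') * K2 * (N⁻¹)^2 * N⁻¹ = (K1*K2) * N^(2*s' - 3) := by
    have h1 : (N⁻¹ : ℝ) = N^(-1:ℝ) := (Real.rpow_neg_one N).symm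
    have h2 : (N^(-1:ℝ))^2 = N^(-2:ℝ) := by
      rw [← Real.rpow_natCast (N^(-1:ℝ)) 2, ← Real.rpow_mul hN0.le]
      norm_num
    rw [h1, h2]
    rw [show (K1 * N^(2*s') * K2 * N^(-2:ℝ) * N^(-1:ℝ) : ℝ)
        = K1 * K2 * (N^(2*s') * N^(-2:ℝ) * N^(-1:ℝ)) from by ring]
    rw [← Real.rpow_add hN0, ← Real.rpow_add hN0]
    ring_nf
  rw [halg] at hle
  rw [XNorm, hfeq, cLow]
  have heq : (K1*K2)^((1:ℝ)/2) * N^(s' - 3/2) = ((K1*K2) * N^(2*s'-3))^((1:ℝ)/2) := by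
    rw [Real.mul_rpow (mul_nonneg hK1pos.le hK2pos.le) (Real.rpow_nonneg hN0.le _),
      ← Real.rpow_mul hN0.le]
    have h12 : (2*s'-3)*((1:ℝ)/2) = s' - 3/2 := by ring
    rw [h12]
  rw [heq]
  exact Real.rpow_le_rpow
    (mul_nonneg (mul_nonneg hK1pos.le hK2pos.le) (Real.rpow_nonneg hN0.le _)) hle (by norm_num)

end Stmt12

open Stmt12 in
/-- Sharpness of the half-derivative gain: with `û = χ_{B₁}`, `v̂ = χ_{B₂}`, one has
`‖uv‖_{X^{s+α,b'}} ≳ N^{s+α-3/2}` for any fixed `b'`, and hence if the bilinear estimate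
`‖uv‖_{X^{s+α,b-1}} ≲ ‖u‖_{X^{s,b}}‖v‖_{X^{s,b}_±}` holds for all `N`, then `α ≤ 1/2`. -/
theorem stmt12 (d : ℕ) [NeZero d] (s b b' α ε : ℝ) (hε : ε = 1 ∨ ε = -1) :
    (∃ c : ℝ, 0 < c ∧ ∀ N : ℝ, 2 ≤ N →
      c * N ^ (s + α - 3/2) ≤
        XNorm d (s + α) b' (stConv d ((SetB₁ d N).indicator 1) ((SetB₂ d N).indicator 1))) ∧
    ((∃ C : ℝ, 0 < C ∧ ∀ N : ℝ, 2 ≤ N →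
        XNorm d (s + α) (b - 1)
            (stConv d ((SetB₁ d N).indicator 1) ((SetB₂ d N).indicator 1)) ≤
          C * XNorm d s b ((SetB₁ d N).indicator 1) *
            XpmNorm d ε s b ((SetB₂ d N).indicator 1)) →
      α ≤ 1/2) := by
  constructor
  · exact ⟨cLow d (s+α) b', cLow_pos d (s+α) b', fun N hN => Xc_ge d (s+α) b' N hN⟩
  · rintro ⟨C, hC0, hest⟩
    by_contra hcon
    push_neg at hcon
    have hx : 0 < α - 1/2 := by linarith
    have hc0 : 0 < cLow d (s+α) (b-1) := cLow_pos d (s+α) (b-1)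
    set c := cLow d (s+α) (b-1) with hc
    set D := C * cKu d s b * cKv d s b with hD
    have hD0 : 0 ≤ D := mul_nonneg (mul_nonneg hC0.le (cKu_nonneg d s b)) (cKv_nonneg d s b)
    have key : ∀ N : ℝ, 2 ≤ N → c * N^(α - 1/2) ≤ D := by
      intro N hN
      have hN0 : (0:ℝ) < N := by linarith
      have h1 := Xc_ge d (s+α) (b-1) N hN
      have h2 := hest N hN
      have h3 := Xu_le d s b N hN
      have h4 := Xv_le d s b ε N hε hN
      have h5 : C * XNorm d s b ((SetB₁ d N).indicator 1) *
            XpmNorm d ε s b ((SetB₂ d N).indicator 1)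
          ≤ C * (cKu d s b * N^(s-1/2)) * (cKv d s b * N^(-(1:ℝ)/2)) := by
        apply mul_le_mul
        · exact mul_le_mul le_rfl h3 (XNorm_nonneg d s b _) hC0.le
        · exact h4
        · exact XpmNorm_nonneg d ε s b _
        · exact mul_nonneg hC0.le (mul_nonneg (cKu_nonneg d s b) (Real.rpow_nonneg hN0.le _))
      have h6 : c * N^(s+α-3/2)
          ≤ C * (cKu d s b * N^(s-1/2)) * (cKv d s b * N^(-(1:ℝ)/2)) :=
        le_trans h1 (le_trans h2 h5)
      have hNs : N^(s+α-3/2) = N^(s-1) * N^(α-1/2) := by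
        rw [← Real.rpow_add hN0]; congr 1; ring
      have hrw : C * (cKu d s b * N^(s-1/2)) * (cKv d s b * N^(-(1:ℝ)/2))
          = D * (N^(s-1/2) * N^(-(1:ℝ)/2)) := by rw [hD]; ring
      have hNN' : N^(s-1/2) * N^(-(1:ℝ)/2) = N^(s-1) := by
        rw [← Real.rpow_add hN0]; congr 1; ring
      rw [hNs, hrw, hNN'] at h6
      have h7 : (c * N^(α-1/2)) * N^(s-1) ≤ D * N^(s-1) := by
        calc (c * N^(α-1/2)) * N^(s-1) = c * (N^(s-1) * N^(α-1/2)) := by ring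
          _ ≤ D * N^(s-1) := h6
      exact le_of_mul_le_mul_right h7 (Real.rpow_pos_of_pos hN0 _)
    have hb1 : (1:ℝ) ≤ D/c + 1 := by
      have := div_nonneg hD0 hc0.le; linarith
    have hN₀2 : (2:ℝ) ≤ max 2 ((D/c + 1) ^ (α - 1/2)⁻¹) := le_max_left _ _
    have hpow : D/c + 1 ≤ (max 2 ((D/c + 1) ^ (α - 1/2)⁻¹))^(α - 1/2) := by
      calc D/c + 1 = ((D/c + 1) ^ (α - 1/2)⁻¹) ^ (α - 1/2) := by
            rw [← Real.rpow_mul (by linarith), inv_mul_cancel₀ hx.ne', Real.rpow_one]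
        _ ≤ (max 2 ((D/c + 1) ^ (α - 1/2)⁻¹))^(α - 1/2) :=
            Real.rpow_le_rpow (Real.rpow_nonneg (by linarith) _) (le_max_right _ _) hx.le
    have hkey := key _ hN₀2
    have hfin : c * (D/c + 1) ≤ D :=
      le_trans (mul_le_mul_of_nonneg_left hpow hc0.le) hkey
    have hexp : c * (D/c + 1) = D + c := by field_simp
    rw [hexp] at hfin
    linarith
end
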